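/- Let k be a field, σ₀ ⊆ N_ℚ a full-dimensional rational polyhedral cone with vertex 0, and e ∈ M a Demazure root of σ₀ with distinguished primitive ray generator μ_e. Define k-linear operators ∂_e^(i) on the semigroup algebra k[σ₀^∨ ∩ M] by ∂_e^(i)(χ^m) = C(⟨m, μ_e⟩, i)·χ^{m + i·e}. Then ∂_e = {∂_e^(i)}_{i≥0} is a locally finite iterative higher derivation on k[σ₀^∨ ∩ M]: ∂_e^(0) = id, the Leibniz rule ∂_e^(i)(fg) = Σ_{i1+i2=i} ∂_e^(i1)(f)·∂_e^(i2)(g) holds, ∂_e^(j)(f) = 0 for j ≫ 0 for each f, and ∂_e^(u)∘∂_e^(v) = C(u+v, u)·∂_e^(u+v). -/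

import Mathlib

open Finset
open scoped Classical

noncomputable def stmt6T (k : Type*) [Field k] {n : ℕ} (S : AddSubmonoid (Fin n → ℤ))
    (x : Fin n → ℤ) : AddMonoidAlgebra k S :=
  if h : x ∈ S then AddMonoidAlgebra.single (⟨x, h⟩ : S) 1 else 0

theorem stmt6T_mul (k : Type*) [Field k] {n : ℕ} (S : AddSubmonoid (Fin n → ℤ))
    {x y : Fin n → ℤ} (hx : x ∈ S) (hy : y ∈ S) :
    stmt6T k S x * stmt6T k S y = stmt6T k S (x + y) := by
  rw [stmt6T, stmt6T, stmt6T, dif_pos hx, dif_pos hy, dif_pos (S.add_mem hx hy),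
    AddMonoidAlgebra.single_mul_single, one_mul]
  rfl

theorem mychoose (d u v : ℕ) (h : v ≤ d) :
    d.choose v * (d - v).choose u = (u + v).choose u * d.choose (u + v) := by
  by_cases h2 : u + v ≤ d
  · have h3 := Nat.choose_mul (n := d) (Nat.le_add_left v u)
    rw [Nat.add_sub_cancel] at h3
    rw [← h3, Nat.choose_symm_add, Nat.mul_comm]
  · rw [Nat.choose_eq_zero_of_lt (show d - v < u by omega),
      Nat.choose_eq_zero_of_lt (show d < u + v by omega), mul_zero, mul_zero]

def stmt6d {n : ℕ} (μ : Fin n → ℤ) (m : Fin n → ℤ) : ℕ := (∑ j, m j * μ j).toNat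

theorem stmt6 (k : Type*) [Field k] (n : ℕ) (G : Finset (Fin n → ℤ))
    (e μ : Fin n → ℤ) (hμ : μ ∈ G)
    (hroot1 : ∑ j, e j * μ j = -1)
    (hroot2 : ∀ v ∈ G, v ≠ μ → 0 ≤ ∑ j, e j * v j)
    (S : AddSubmonoid (Fin n → ℤ))
    (hS : ∀ m : Fin n → ℤ, m ∈ S ↔ ∀ v ∈ G, 0 ≤ ∑ j, m j * v j)
    (D : ℕ → AddMonoidAlgebra k S →ₗ[k] AddMonoidAlgebra k S)
    (hD : ∀ (i : ℕ) (m : S),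
      D i (AddMonoidAlgebra.single m (1 : k)) =
        if h : ((m : Fin n → ℤ) + (i : ℤ) • e) ∈ S then
          (((∑ j, (m : Fin n → ℤ) j * μ j).toNat.choose i : k) •
            AddMonoidAlgebra.single (⟨(m : Fin n → ℤ) + (i : ℤ) • e, h⟩ : S) (1 : k))
        else 0) :
    D 0 = LinearMap.id ∧
    (∀ (i : ℕ) (f g : AddMonoidAlgebra k S),
      D i (f * g) = ∑ p ∈ antidiagonal i, D p.1 f * D p.2 g) ∧
    (∀ f : AddMonoidAlgebra k S, ∃ N : ℕ, ∀ j ≥ N, D j f = 0) ∧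
    (∀ u v : ℕ, (D u) ∘ₗ (D v) = ((u + v).choose u) • D (u + v)) := by
  -- basic sum manipulation
  have hsum' : ∀ (m : Fin n → ℤ) (i : ℕ) (v : Fin n → ℤ),
      ∑ j, (m + (i : ℤ) • e) j * v j = (∑ j, m j * v j) + (i : ℤ) * ∑ j, e j * v j := by
    intro m i v
    rw [Finset.mul_sum, ← Finset.sum_add_distrib]
    refine Finset.sum_congr rfl fun j _ => ?_
    simp only [Pi.add_apply, Pi.smul_apply, smul_eq_mul]
    ring
  have hd0 : ∀ m : S, 0 ≤ ∑ j, (m : Fin n → ℤ) j * μ j :=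
    fun m => (hS m).mp m.2 μ hμ
  have hmem : ∀ (m : S) (i : ℕ),
      ((m : Fin n → ℤ) + (i : ℤ) • e) ∈ S ↔ (i : ℤ) ≤ ∑ j, (m : Fin n → ℤ) j * μ j := by
    intro m i
    rw [hS]
    constructor
    · intro h
      have h2 := h μ hμ
      rw [hsum' _ _ μ, hroot1] at h2
      linarith
    · intro h v hv
      rw [hsum']
      by_cases hvμ : v = μ
      · subst hvμ; rw [hroot1]; linarith
      · have h1 := (hS m).mp m.2 v hv
        have h2 := hroot2 v hv hvμ
        have h3 : (0 : ℤ) ≤ (i : ℤ) := Int.natCast_nonneg i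
        have := mul_nonneg h3 h2
        linarith
  have hmemN : ∀ (m : S) (i : ℕ),
      ((m : Fin n → ℤ) + (i : ℤ) • e) ∈ S ↔ i ≤ stmt6d μ (m : Fin n → ℤ) := by
    intro m i
    rw [hmem]
    have := hd0 m
    unfold stmt6d
    omega
  -- the basic formula
  have hDs : ∀ (i : ℕ) (m : S),
      D i (AddMonoidAlgebra.single m (1 : k)) =
        ((stmt6d μ (m : Fin n → ℤ)).choose i : k) •
          stmt6T k S ((m : Fin n → ℤ) + (i : ℤ) • e) := by
    intro i m
    rw [hD, stmt6T]
    split_ifs with h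
    · rfl
    · rw [smul_zero]
  have hsingle_smul : ∀ (a : S) (c : k),
      AddMonoidAlgebra.single a c = c • AddMonoidAlgebra.single a (1 : k) := by
    intro a c
    rw [AddMonoidAlgebra.smul_single', mul_one]
  -- Leibniz on basis elements
  have key : ∀ (i : ℕ) (a b : S),
      D i (AddMonoidAlgebra.single a (1 : k) * AddMonoidAlgebra.single b (1 : k)) =
        ∑ p ∈ antidiagonal i,
          D p.1 (AddMonoidAlgebra.single a (1 : k)) *
            D p.2 (AddMonoidAlgebra.single b (1 : k)) := by
    intro i a b
    rw [AddMonoidAlgebra.single_mul_single, one_mul, hDs]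
    have hdsum : stmt6d μ ((a + b : S) : Fin n → ℤ) =
        stmt6d μ (a : Fin n → ℤ) + stmt6d μ (b : Fin n → ℤ) := by
      unfold stmt6d
      have hcoe : ((a + b : S) : Fin n → ℤ) = (a : Fin n → ℤ) + (b : Fin n → ℤ) := rfl
      have hsp : ∑ j, ((a : Fin n → ℤ) + (b : Fin n → ℤ)) j * μ j =
          (∑ j, (a : Fin n → ℤ) j * μ j) + ∑ j, (b : Fin n → ℤ) j * μ j := by
        rw [← Finset.sum_add_distrib]
        refine Finset.sum_congr rfl fun j _ => ?_
        simp only [Pi.add_apply]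
        ring
      rw [hcoe, hsp]
      have := hd0 a
      have := hd0 b
      omega
    rw [hdsum, Nat.add_choose_eq, Nat.cast_sum, Finset.sum_smul]
    refine Finset.sum_congr rfl fun p hp => ?_
    rw [hDs, hDs, smul_mul_smul_comm, Nat.cast_mul]
    by_cases h1 : ((a : Fin n → ℤ) + (p.1 : ℤ) • e) ∈ S
    · by_cases h2 : ((b : Fin n → ℤ) + (p.2 : ℤ) • e) ∈ S
      · rw [stmt6T_mul k S h1 h2]
        have hip : p.1 + p.2 = i := Finset.HasAntidiagonal.mem_antidiagonal.mp hp
        have helt : ((a + b : S) : Fin n → ℤ) + (i : ℤ) • e =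
            ((a : Fin n → ℤ) + (p.1 : ℤ) • e) + ((b : Fin n → ℤ) + (p.2 : ℤ) • e) := by
          funext j
          simp only [Pi.add_apply, Pi.smul_apply, smul_eq_mul, AddSubmonoid.coe_add, ← hip]
          push_cast
          ring
        rw [helt]
      · have h2' : stmt6d μ (b : Fin n → ℤ) < p.2 :=
          lt_of_not_ge fun hle => h2 ((hmemN b p.2).mpr hle)
        rw [Nat.choose_eq_zero_of_lt h2', Nat.cast_zero, mul_zero, zero_smul, zero_smul]
    · have h1' : stmt6d μ (a : Fin n → ℤ) < p.1 :=
        lt_of_not_ge fun hle => h1 ((hmemN a p.1).mpr hle)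
      rw [Nat.choose_eq_zero_of_lt h1', Nat.cast_zero, zero_mul, zero_smul, zero_smul]
  refine ⟨?_, ?_, ?_, ?_⟩
  -- Part 1 : D 0 = id
  · apply LinearMap.ext
    intro f
    rw [LinearMap.id_apply]
    conv_lhs => rw [← AddMonoidAlgebra.sum_coeff_single f]
    conv_rhs => rw [← AddMonoidAlgebra.sum_coeff_single f]
    rw [map_finsuppSum, Finsupp.sum, Finsupp.sum]
    refine Finset.sum_congr rfl fun a _ => ?_
    rw [hsingle_smul, map_smul, hDs]
    have h0 : ((a : Fin n → ℤ) + ((0 : ℕ) : ℤ) • e) = (a : Fin n → ℤ) := by simp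
    rw [h0, Nat.choose_zero_right, Nat.cast_one, one_smul, stmt6T, dif_pos a.2]
  -- Part 2 : Leibniz
  · intro i f g
    induction f using AddMonoidAlgebra.induction_linear with
    | zero => simp
    | add f1 f2 hf1 hf2 => simp [add_mul, hf1, hf2, Finset.sum_add_distrib]
    | single a c =>
      induction g using AddMonoidAlgebra.induction_linear with
      | zero => simp
      | add g1 g2 hg1 hg2 => simp [mul_add, hg1, hg2, Finset.sum_add_distrib]
      | single b c' =>
        rw [hsingle_smul a c, hsingle_smul b c']
        simp only [smul_mul_smul_comm, map_smul]
        rw [key, Finset.smul_sum]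
  -- Part 3 : local finiteness
  · intro f
    refine ⟨(f.coeff.support.sup fun m => stmt6d μ (m : Fin n → ℤ)) + 1, fun j hj => ?_⟩
    conv_lhs => rw [← AddMonoidAlgebra.sum_coeff_single f]
    rw [map_finsuppSum]
    rw [Finsupp.sum]
    apply Finset.sum_eq_zero
    intro m hm
    rw [hsingle_smul, map_smul, hDs]
    have hle : stmt6d μ (m : Fin n → ℤ) ≤ f.coeff.support.sup fun m : S => stmt6d μ (m : Fin n → ℤ) :=
      by simpa using Finset.le_sup (f := fun m : S => stmt6d μ (m : Fin n → ℤ)) hm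
    have hlt : stmt6d μ (m : Fin n → ℤ) < j := by omega
    rw [Nat.choose_eq_zero_of_lt hlt, Nat.cast_zero, zero_smul, smul_zero]
  -- Part 4 : iterativity
  · intro u v
    have core : ∀ a : S, D u (D v (AddMonoidAlgebra.single a (1 : k))) =
        (u + v).choose u • D (u + v) (AddMonoidAlgebra.single a (1 : k)) := ?_
    · apply LinearMap.ext
      intro f
      rw [LinearMap.comp_apply, LinearMap.smul_apply]
      conv_lhs => rw [← AddMonoidAlgebra.sum_coeff_single f]
      conv_rhs => rw [← AddMonoidAlgebra.sum_coeff_single f]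
      rw [map_finsuppSum, map_finsuppSum, map_finsuppSum, Finsupp.sum, Finsupp.sum,
        Finset.smul_sum]
      refine Finset.sum_congr rfl fun a _ => ?_
      rw [hsingle_smul, map_smul, map_smul, core,
        map_smul, smul_comm]
    intro a
    rw [hDs, map_smul]
    by_cases h1 : ((a : Fin n → ℤ) + (v : ℤ) • e) ∈ S
    · have hv : v ≤ stmt6d μ (a : Fin n → ℤ) := (hmemN a v).mp h1
      have hT : stmt6T k S ((a : Fin n → ℤ) + (v : ℤ) • e) =
          AddMonoidAlgebra.single (⟨(a : Fin n → ℤ) + (v : ℤ) • e, h1⟩ : S) 1 := dif_pos h1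
      rw [hT, hDs]
      have e1 : (((⟨(a : Fin n → ℤ) + (v : ℤ) • e, h1⟩ : S) : Fin n → ℤ) + (u : ℤ) • e) =
          (a : Fin n → ℤ) + ((u + v : ℕ) : ℤ) • e := by
        funext j
        simp only [Pi.add_apply, Pi.smul_apply, smul_eq_mul]
        push_cast
        ring
      have e2 : stmt6d μ (((⟨(a : Fin n → ℤ) + (v : ℤ) • e, h1⟩ : S) : Fin n → ℤ)) =
          stmt6d μ (a : Fin n → ℤ) - v := by
        unfold stmt6d
        rw [hsum' _ _ μ, hroot1, mul_neg_one]
        have := hd0 a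
        unfold stmt6d at hv
        omega
      rw [e1, e2, smul_smul, hDs, ← Nat.cast_smul_eq_nsmul k, smul_smul,
        ← Nat.cast_mul, ← Nat.cast_mul, mychoose _ _ _ hv]
    · have hT : stmt6T k S ((a : Fin n → ℤ) + (v : ℤ) • e) = 0 := dif_neg h1
      have hv : stmt6d μ (a : Fin n → ℤ) < v :=
        lt_of_not_ge fun hle => h1 ((hmemN a v).mpr hle)
      rw [hT, map_zero, smul_zero, hDs,
        Nat.choose_eq_zero_of_lt (show stmt6d μ (a : Fin n → ℤ) < u + v by omega),
        Nat.cast_zero, zero_smul, smul_zero]
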